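/- Let σ : S → A and τ : T → A be maps of event structures, and S ∧ T their interaction. For each configuration x ∈ C(S ∧ T), the union φ_x = ∪x of the graphs of the elements of x is (the graph of) a secured bijection in SB(σ, τ), the map (s,t) ↦ [(s,t)]_{φ_x} (down-closure of (s,t) in the induced order on φ_x) is an order-isomorphism φ_x ≅ x, and x ↦ φ_x defines an order-isomorphism C(S ∧ T) ≅ SB(σ, τ). -/

import Mathlib

/-- An event structure presented as raw data: a set of events, a causality
relation and a consistency predicate on (finite) sets of events. -/
structure ES where
  Evt : Type
  le : Evt → Evt → Prop
  Con : Set (Set Evt)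

namespace ES

/-- Strict causality. -/
def lt (E : ES) (a b : E.Evt) : Prop := E.le a b ∧ a ≠ b

/-- The axioms of event structures: `le` is a partial order, causes `[e]` are
finite, consistency is a nonempty collection of finite sets, closed under
subsets, containing all singletons, and closed under adding causal
dependencies. -/
def IsES (E : ES) : Prop :=
  (∀ e, E.le e e) ∧
  (∀ a b c, E.le a b → E.le b c → E.le a c) ∧
  (∀ a b, E.le a b → E.le b a → a = b) ∧
  (∀ e, {e' | E.le e' e}.Finite) ∧
  E.Con.Nonempty ∧
  (∀ X ∈ E.Con, X.Finite) ∧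
  (∀ e, ({e} : Set E.Evt) ∈ E.Con) ∧
  (∀ X ∈ E.Con, ∀ Y, Y ⊆ X → Y ∈ E.Con) ∧
  (∀ X ∈ E.Con, ∀ e ∈ X, ∀ e', E.le e' e → insert e' X ∈ E.Con)

/-- A (finite) configuration: a finite, consistent and down-closed set of events. -/
def Config (E : ES) (x : Set E.Evt) : Prop :=
  x.Finite ∧ (∀ Y, Y ⊆ x → Y.Finite → Y ∈ E.Con) ∧
  ∀ e ∈ x, ∀ e', E.le e' e → e' ∈ x

/-- Immediate causality `e ⇢ e'`. -/
def imc (E : ES) (a b : E.Evt) : Prop :=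
  E.lt a b ∧ ∀ c, E.le a c → E.le c b → c = a ∨ c = b

/-- Simple parallel composition of event structures. -/
def par (E F : ES) : ES where
  Evt := E.Evt ⊕ F.Evt
  le := fun p q =>
    match p, q with
    | Sum.inl a, Sum.inl b => E.le a b
    | Sum.inr a, Sum.inr b => F.le a b
    | _, _ => False
  Con := {X | Sum.inl ⁻¹' X ∈ E.Con ∧ Sum.inr ⁻¹' X ∈ F.Con}

/-- Projection (hiding): restrict an event structure to a subset `V` of events. -/
def proj (E : ES) (V : Set E.Evt) : ES where
  Evt := ↥V
  le := fun a b => E.le a.val b.val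
  Con := {X | Subtype.val '' X ∈ E.Con}

end ES

/-- A (total) map of event structures: preserves configurations and is
injective on each configuration. -/
def IsMap (E F : ES) (f : E.Evt → F.Evt) : Prop :=
  (∀ x, E.Config x → F.Config (f '' x)) ∧ ∀ x, E.Config x → Set.InjOn f x
/-- The relation `◁` generating the order on the graph `G` of a bijection:
`p ◁ q` when both are in `G` and `p.1 <_S q.1` or `p.2 <_T q.2`. -/
def gRel (S T : ES) (G : Set (S.Evt × T.Evt)) :
    (S.Evt × T.Evt) → (S.Evt × T.Evt) → Prop :=
  fun p q => p ∈ G ∧ q ∈ G ∧ (S.lt p.1 q.1 ∨ T.lt p.2 q.2)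

/-- The graph `G` is secured: the reflexive-transitive closure of `◁` on `G`
is antisymmetric (hence a partial order). -/
def SecuredOn (S T : ES) (G : Set (S.Evt × T.Evt)) : Prop :=
  ∀ p q, Relation.ReflTransGen (gRel S T G) p q →
    Relation.ReflTransGen (gRel S T G) q p → p = q

/-- `G` is (the graph of) a secured bijection `φ : x ≃ σ x = τ y ≃ y` between
configurations `x ∈ C(S)` and `y ∈ C(T)`, an element of `SB(σ, τ)`. -/
def IsSecBij (S T A : ES) (σ : S.Evt → A.Evt) (τ : T.Evt → A.Evt)
    (G : Set (S.Evt × T.Evt)) : Prop :=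
  S.Config (Prod.fst '' G) ∧ T.Config (Prod.snd '' G) ∧
  (∀ p ∈ G, σ p.1 = τ p.2) ∧
  (∀ s ∈ Prod.fst '' G, ∀ t ∈ Prod.snd '' G, σ s = τ t → (s, t) ∈ G) ∧
  σ '' (Prod.fst '' G) = τ '' (Prod.snd '' G) ∧
  SecuredOn S T G

/-- `G` has a top (greatest) element for the induced order. -/
def IsPrime (S T : ES) (G : Set (S.Evt × T.Evt)) : Prop :=
  ∃ p ∈ G, ∀ q ∈ G, Relation.ReflTransGen (gRel S T G) q p

/-- The interaction `S ∧ T` of `σ : S → A` and `τ : T → A`: events are the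
prime secured bijections, causality is inclusion of graphs, and a finite set
of events is consistent when the union of their graphs is a secured bijection. -/
def Interaction (S T A : ES) (σ : S.Evt → A.Evt) (τ : T.Evt → A.Evt) : ES where
  Evt := {G : Set (S.Evt × T.Evt) // IsSecBij S T A σ τ G ∧ IsPrime S T G}
  le := fun G G' => G.val ⊆ G'.val
  Con := {X | X.Finite ∧ IsSecBij S T A σ τ (⋃ G ∈ X, G.val)}

/-- The poset of configurations of the interaction `S ∧ T`, ordered by
inclusion. -/
def InterConfigPoset (S T A : ES) (σ : S.Evt → A.Evt) (τ : T.Evt → A.Evt) : Type :=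
  {x : Set (Interaction S T A σ τ).Evt // (Interaction S T A σ τ).Config x}

instance (S T A : ES) (σ : S.Evt → A.Evt) (τ : T.Evt → A.Evt) :
    PartialOrder (InterConfigPoset S T A σ τ) := Subtype.partialOrder _

/-- The poset `SB(σ, τ)` of secured bijections, ordered by inclusion of
graphs. -/
def SBPoset (S T A : ES) (σ : S.Evt → A.Evt) (τ : T.Evt → A.Evt) : Type :=
  {G : Set (S.Evt × T.Evt) // IsSecBij S T A σ τ G}

instance (S T A : ES) (σ : S.Evt → A.Evt) (τ : T.Evt → A.Evt) :
    PartialOrder (SBPoset S T A σ τ) := Subtype.partialOrder _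
namespace SecAux

variable {S T A : ES} {σ : S.Evt → A.Evt} {τ : T.Evt → A.Evt}

lemma gRel_mono {G U : Set (S.Evt × T.Evt)} (h : G ⊆ U) :
    ∀ p q, gRel S T G p q → gRel S T U p q :=
  fun _ _ hr => ⟨h hr.1, h hr.2.1, hr.2.2⟩

lemma rtg_mono {G U : Set (S.Evt × T.Evt)} (h : G ⊆ U) {p q}
    (hr : Relation.ReflTransGen (gRel S T G) p q) :
    Relation.ReflTransGen (gRel S T U) p q :=
  Relation.ReflTransGen.mono (gRel_mono h) _ _ hr

lemma right_unique (hτ : IsMap T A τ) {U : Set (S.Evt × T.Evt)}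
    (hU : IsSecBij S T A σ τ U) {s : S.Evt} {t t' : T.Evt}
    (h1 : (s, t) ∈ U) (h2 : (s, t') ∈ U) : t = t' := by
  have a := hU.2.2.1 _ h1
  have b := hU.2.2.1 _ h2
  exact (hτ.2 _ hU.2.1) ⟨(s, t), h1, rfl⟩ ⟨(s, t'), h2, rfl⟩ (by rw [← a, ← b])

lemma left_unique (hσ : IsMap S A σ) {U : Set (S.Evt × T.Evt)}
    (hU : IsSecBij S T A σ τ U) {s s' : S.Evt} {t : T.Evt}
    (h1 : (s, t) ∈ U) (h2 : (s', t) ∈ U) : s = s' := by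
  have a := hU.2.2.1 _ h1
  have b := hU.2.2.1 _ h2
  exact (hσ.2 _ hU.1) ⟨(s, t), h1, rfl⟩ ⟨(s', t), h2, rfl⟩ (by rw [a, b])

/-- `D` is down-closed in `U` for the relation `◁` of `U`. -/
def DClosed (U D : Set (S.Evt × T.Evt)) : Prop :=
  ∀ ⦃q p⦄, p ∈ D → gRel S T U q p → q ∈ D

lemma rtg_restrict {U D : Set (S.Evt × T.Evt)} (hD : DClosed U D) {p q}
    (hp : p ∈ D) (h : Relation.ReflTransGen (gRel S T U) q p) :
    q ∈ D ∧ Relation.ReflTransGen (gRel S T D) q p := by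
  induction h using Relation.ReflTransGen.head_induction_on with
  | refl => exact ⟨hp, .refl⟩
  | head hstep _ ih =>
    obtain ⟨hcD, hcp⟩ := ih
    exact ⟨hD hcD hstep, .head ⟨hD hcD hstep, hcD, hstep.2.2⟩ hcp⟩

/-- Any secured bijection contained in a secured bijection `U` is down-closed in `U`. -/
lemma subbij_dclosed (hσ : IsMap S A σ) (hτ : IsMap T A τ)
    {U G : Set (S.Evt × T.Evt)} (hU : IsSecBij S T A σ τ U)
    (hG : IsSecBij S T A σ τ G) (hGU : G ⊆ U) : DClosed U G := by
  rintro ⟨s', t'⟩ ⟨s, t⟩ hp ⟨hqU, hpU, hlt⟩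
  rcases hlt with h | h
  · have hs' : s' ∈ Prod.fst '' G := hG.1.2.2 s ⟨(s, t), hp, rfl⟩ s' h.1
    obtain ⟨⟨a, b⟩, hab, he⟩ := hs'
    cases he
    have hb : b = t' := right_unique hτ hU (hGU hab) hqU
    rwa [← hb]
  · have ht' : t' ∈ Prod.snd '' G := hG.2.1.2.2 t ⟨(s, t), hp, rfl⟩ t' h.1
    obtain ⟨⟨a, b⟩, hab, he⟩ := ht'
    cases he
    have ha : a = s' := left_unique hσ hU (hGU hab) hqU
    rwa [← ha]

/-- Any down-closed subset of a secured bijection is a secured bijection. -/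
lemma dclosed_secbij (hσ : IsMap S A σ) (hτ : IsMap T A τ)
    {U D : Set (S.Evt × T.Evt)} (hU : IsSecBij S T A σ τ U)
    (hDU : D ⊆ U) (hD : DClosed U D) : IsSecBij S T A σ τ D := by
  have hfst : Prod.fst '' D ⊆ Prod.fst '' U := Set.image_mono hDU
  have hsnd : Prod.snd '' D ⊆ Prod.snd '' U := Set.image_mono hDU
  refine ⟨⟨hU.1.1.subset hfst, fun Y hY hYf => hU.1.2.1 Y (hY.trans hfst) hYf, ?_⟩,
    ⟨hU.2.1.1.subset hsnd, fun Y hY hYf => hU.2.1.2.1 Y (hY.trans hsnd) hYf, ?_⟩,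
    fun p hp => hU.2.2.1 p (hDU hp), ?_, ?_, ?_⟩
  · rintro s ⟨⟨a, b⟩, hab, rfl⟩ s' hle
    by_cases he : s' = (a, b).1
    · exact he ▸ ⟨_, hab, rfl⟩
    · obtain ⟨⟨c, d⟩, hcd, he2⟩ := hU.1.2.2 _ ⟨_, hDU hab, rfl⟩ s' hle
      subst he2
      exact ⟨_, hD hab ⟨hcd, hDU hab, Or.inl ⟨hle, he⟩⟩, rfl⟩
  · rintro t ⟨⟨a, b⟩, hab, rfl⟩ t' hle
    by_cases he : t' = (a, b).2
    · exact he ▸ ⟨_, hab, rfl⟩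
    · obtain ⟨⟨c, d⟩, hcd, he2⟩ := hU.2.1.2.2 _ ⟨_, hDU hab, rfl⟩ t' hle
      subst he2
      exact ⟨_, hD hab ⟨hcd, hDU hab, Or.inr ⟨hle, he⟩⟩, rfl⟩
  · rintro s hs t ht hst
    obtain ⟨pa, hpa, rfl⟩ := hs
    obtain ⟨pc, hpc, rfl⟩ := ht
    have hin : (pa.1, pc.2) ∈ U :=
      hU.2.2.2.1 _ ⟨_, hDU hpa, rfl⟩ _ ⟨_, hDU hpc, rfl⟩ hst
    have hpaU : (pa.1, pa.2) ∈ U := by simpa using hDU hpa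
    have hb : pa.2 = pc.2 := right_unique hτ hU hpaU hin
    rw [← hb]; simpa using hpa
  · ext u
    constructor
    · rintro ⟨s, ⟨pa, hpa, rfl⟩, rfl⟩
      exact ⟨pa.2, ⟨pa, hpa, rfl⟩, (hU.2.2.1 _ (hDU hpa)).symm⟩
    · rintro ⟨t, ⟨pa, hpa, rfl⟩, rfl⟩
      exact ⟨pa.1, ⟨pa, hpa, rfl⟩, hU.2.2.1 _ (hDU hpa)⟩
  · exact fun p q h1 h2 => hU.2.2.2.2.2 p q (rtg_mono hDU h1) (rtg_mono hDU h2)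

/-- The down-closure of a point. -/
def dcl (S T : ES) (U : Set (S.Evt × T.Evt)) (p : S.Evt × T.Evt) :
    Set (S.Evt × T.Evt) :=
  {q | q ∈ U ∧ Relation.ReflTransGen (gRel S T U) q p}

lemma dcl_subset {U : Set (S.Evt × T.Evt)} {p} : dcl S T U p ⊆ U := fun _ hq => hq.1

lemma mem_dcl_self {U : Set (S.Evt × T.Evt)} {p} (hp : p ∈ U) : p ∈ dcl S T U p :=
  ⟨hp, .refl⟩

lemma dcl_dclosed {U : Set (S.Evt × T.Evt)} {p} : DClosed U (dcl S T U p) :=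
  fun q r hr hqr => ⟨hqr.1, .head hqr hr.2⟩

lemma dcl_prime {U : Set (S.Evt × T.Evt)} {p} (hp : p ∈ U) :
    IsPrime S T (dcl S T U p) :=
  ⟨p, mem_dcl_self hp, fun q hq => (rtg_restrict dcl_dclosed (mem_dcl_self hp) hq.2).2⟩

lemma eq_dcl_of_prime (hσ : IsMap S A σ) (hτ : IsMap T A τ)
    {U G : Set (S.Evt × T.Evt)} (hU : IsSecBij S T A σ τ U)
    (hG : IsSecBij S T A σ τ G) (hGU : G ⊆ U) {p} (hp : p ∈ G)
    (htop : ∀ q ∈ G, Relation.ReflTransGen (gRel S T G) q p) :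
    G = dcl S T U p := by
  apply Set.Subset.antisymm
  · exact fun q hq => ⟨hGU hq, rtg_mono hGU (htop q hq)⟩
  · exact fun q hq => (rtg_restrict (subbij_dclosed hσ hτ hU hG hGU) hp hq.2).1

end SecAux
namespace SecAux

variable {S T A : ES} {σ : S.Evt → A.Evt} {τ : T.Evt → A.Evt}

/-- The union of the graphs of a configuration of the interaction is a
secured bijection. -/
lemma union_secbij {x : Set (Interaction S T A σ τ).Evt}
    (hx : (Interaction S T A σ τ).Config x) :
    IsSecBij S T A σ τ (⋃ G ∈ x, G.val) :=
  (hx.2.1 x subset_rfl hx.1).2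

lemma subset_union {x : Set (Interaction S T A σ τ).Evt}
    {G : (Interaction S T A σ τ).Evt} (hG : G ∈ x) :
    G.val ⊆ ⋃ G ∈ x, G.val :=
  Set.subset_biUnion_of_mem hG

/-- Any prime secured bijection contained in the union of a configuration
belongs to the configuration. -/
lemma mem_config_of_subset (hσ : IsMap S A σ) (hτ : IsMap T A τ)
    {x : Set (Interaction S T A σ τ).Evt}
    (hx : (Interaction S T A σ τ).Config x)
    (G : (Interaction S T A σ τ).Evt) (hsub : G.val ⊆ ⋃ G ∈ x, G.val) :
    G ∈ x := by
  have hU := union_secbij hx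
  obtain ⟨p, hpG, htop⟩ := G.2.2
  have hGd : G.val = dcl S T (⋃ G ∈ x, G.val) p :=
    eq_dcl_of_prime hσ hτ hU G.2.1 hsub hpG htop
  have hpU : p ∈ ⋃ G ∈ x, G.val := hsub hpG
  rw [Set.mem_iUnion₂] at hpU
  obtain ⟨G₀, hG₀x, hpG₀⟩ := hpU
  have hdc : DClosed (⋃ G ∈ x, G.val) G₀.val :=
    subbij_dclosed hσ hτ hU G₀.2.1 (subset_union hG₀x)
  have hle : G.val ⊆ G₀.val := by
    rw [hGd]
    exact fun q hq => (rtg_restrict hdc hpG₀ hq.2).1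
  exact hx.2.2 G₀ hG₀x G hle

/-- A configuration of the interaction is determined by the union of its
graphs. -/
lemma config_eq_of_union_eq (hσ : IsMap S A σ) (hτ : IsMap T A τ)
    {x y : Set (Interaction S T A σ τ).Evt}
    (hx : (Interaction S T A σ τ).Config x)
    (hy : (Interaction S T A σ τ).Config y)
    (h : (⋃ G ∈ x, G.val) = ⋃ G ∈ y, G.val) : x = y := by
  ext G
  constructor
  · intro hG
    exact mem_config_of_subset hσ hτ hy G (h ▸ subset_union hG)
  · intro hG
    exact mem_config_of_subset hσ hτ hx G (h ▸ subset_union hG)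

/-- Conversely, every secured bijection arises as the union of a
configuration: the set of prime secured bijections below it. -/
lemma exists_config_of_secbij (hσ : IsMap S A σ) (hτ : IsMap T A τ)
    {H : Set (S.Evt × T.Evt)} (hH : IsSecBij S T A σ τ H) :
    ∃ x : Set (Interaction S T A σ τ).Evt,
      (Interaction S T A σ τ).Config x ∧ (⋃ G ∈ x, G.val) = H := by
  classical
  refine ⟨{G | G.val ⊆ H}, ⟨?_, ?_, ?_⟩, ?_⟩
  · -- finiteness
    have hfstinj : Set.InjOn Prod.fst H := by
      rintro ⟨a, b⟩ hab ⟨c, d⟩ hcd (h : a = c)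
      subst h
      exact Prod.ext rfl (right_unique hτ hH hab hcd)
    have hHfin : H.Finite := Set.Finite.of_finite_image hH.1.1 hfstinj
    have himg : Subtype.val '' {G : (Interaction S T A σ τ).Evt | G.val ⊆ H} ⊆
        (fun p => dcl S T H p) '' H := by
      rintro D ⟨G, hG, rfl⟩
      obtain ⟨p, hpG, htop⟩ := G.2.2
      exact ⟨p, hG hpG, (eq_dcl_of_prime hσ hτ hH G.2.1 hG hpG htop).symm⟩
    exact Set.Finite.of_finite_image ((hHfin.image _).subset himg)
      (Subtype.val_injective.injOn)
  · -- consistency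
    intro Y hY hYf
    refine ⟨hYf, ?_⟩
    have hsub : (⋃ G ∈ Y, G.val) ⊆ H := by
      refine Set.iUnion₂_subset fun G hG => hY hG
    refine dclosed_secbij hσ hτ hH hsub ?_
    intro q p hp hqp
    rw [Set.mem_iUnion₂] at hp ⊢
    obtain ⟨G, hGY, hpG⟩ := hp
    exact ⟨G, hGY, subbij_dclosed hσ hτ hH G.2.1 (hY hGY) hpG hqp⟩
  · -- down-closure
    intro G hG G' hle
    exact Set.Subset.trans hle hG
  · -- union equals H
    apply Set.Subset.antisymm
    · exact Set.iUnion₂_subset fun G hG => hG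
    · intro p hp
      rw [Set.mem_iUnion₂]
      exact ⟨⟨dcl S T H p, dclosed_secbij hσ hτ hH dcl_subset dcl_dclosed,
        dcl_prime hp⟩, dcl_subset, mem_dcl_self hp⟩

end SecAux
/-- for every configuration `x` of the interaction `S ∧ T`, the
union `φ_x` of the graphs of the elements of `x` is a secured bijection in
`SB(σ, τ)`; the map `(s, t) ↦ [(s, t)]_{φ_x}` is an order-isomorphism
`φ_x ≅ x`; and `x ↦ φ_x` defines an order-isomorphism `C(S ∧ T) ≅ SB(σ, τ)`. -/
theorem interaction_configurations_are_secured_bijections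
    (S T A : ES) (hS : S.IsES) (hT : T.IsES) (hA : A.IsES)
    (σ : S.Evt → A.Evt) (τ : T.Evt → A.Evt)
    (hσ : IsMap S A σ) (hτ : IsMap T A τ) :
    (∀ x : Set (Interaction S T A σ τ).Evt, (Interaction S T A σ τ).Config x →
      IsSecBij S T A σ τ (⋃ G ∈ x, G.val) ∧
      ∃ F : {p // p ∈ ⋃ G ∈ x, G.val} ≃ {G // G ∈ x},
        (∀ p, ((F p).val).val =
            {q | q ∈ (⋃ G ∈ x, G.val) ∧
              Relation.ReflTransGen (gRel S T (⋃ G ∈ x, G.val)) q p.val}) ∧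
        (∀ p q, Relation.ReflTransGen (gRel S T (⋃ G ∈ x, G.val)) p.val q.val ↔
            ((F p).val).val ⊆ ((F q).val).val)) ∧
    ∃ Φ : InterConfigPoset S T A σ τ ≃o SBPoset S T A σ τ,
      ∀ x, (Φ x).val = ⋃ G ∈ x.val, G.val := by
  constructor
  · intro x hx
    have hU := SecAux.union_secbij hx
    refine ⟨hU, ?_⟩
    let toF : {p // p ∈ ⋃ G ∈ x, G.val} → {G // G ∈ x} := fun p =>
      ⟨⟨SecAux.dcl S T (⋃ G ∈ x, G.val) p.val,
        SecAux.dclosed_secbij hσ hτ hU SecAux.dcl_subset SecAux.dcl_dclosed,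
        SecAux.dcl_prime p.2⟩,
       SecAux.mem_config_of_subset hσ hτ hx _ SecAux.dcl_subset⟩
    have hbij : Function.Bijective toF := by
      constructor
      · intro p q h
        have h' : SecAux.dcl S T (⋃ G ∈ x, G.val) p.val =
            SecAux.dcl S T (⋃ G ∈ x, G.val) q.val :=
          congrArg (fun G => G.val.val) h
        have h1 := (h' ▸ SecAux.mem_dcl_self p.2 :
          p.val ∈ SecAux.dcl S T (⋃ G ∈ x, G.val) q.val).2
        have h2 := (h'.symm ▸ SecAux.mem_dcl_self q.2 :
          q.val ∈ SecAux.dcl S T (⋃ G ∈ x, G.val) p.val).2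
        exact Subtype.ext (hU.2.2.2.2.2 _ _ h1 h2)
      · rintro ⟨G, hGx⟩
        obtain ⟨p, hpG, htop⟩ := G.2.2
        refine ⟨⟨p, SecAux.subset_union hGx hpG⟩, ?_⟩
        exact Subtype.ext (Subtype.ext
          (SecAux.eq_dcl_of_prime hσ hτ hU G.2.1 (SecAux.subset_union hGx)
            hpG htop).symm)
    refine ⟨Equiv.ofBijective toF hbij, fun p => rfl, fun p q => ?_⟩
    constructor
    · intro h r hr
      exact ⟨hr.1, hr.2.trans h⟩
    · intro h
      exact (h (SecAux.mem_dcl_self p.2)).2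
  · let toΦ : InterConfigPoset S T A σ τ → SBPoset S T A σ τ :=
      fun x => ⟨⋃ G ∈ x.val, G.val, SecAux.union_secbij x.2⟩
    have hbij : Function.Bijective toΦ := by
      constructor
      · intro a b h
        exact Subtype.ext (SecAux.config_eq_of_union_eq hσ hτ a.2 b.2
          (congrArg Subtype.val h))
      · intro H
        obtain ⟨y, hy, he⟩ := SecAux.exists_config_of_secbij hσ hτ H.2
        exact ⟨⟨y, hy⟩, Subtype.ext he⟩
    refine ⟨⟨Equiv.ofBijective toΦ hbij, ?_⟩, fun x => rfl⟩
    intro a b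
    constructor
    · intro h G hG
      exact SecAux.mem_config_of_subset hσ hτ b.2 G
        ((SecAux.subset_union hG).trans h)
    · intro h
      exact Set.iUnion₂_mono' fun G hG => ⟨G, h hG, subset_rfl⟩
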